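/- Let $m > 1$ be an integer. Then $\sum_{h/k} \sum_{s=1}^{\lfloor \min\{m/h,\,m/(k-h)\} \rfloor} \binom{m}{s h}\binom{m}{s(k-h)} = 2^{2m} - 2^{m+1} + 1$, where the outer sum ranges over all reduced fractions $h/k \in \mathcal{F}(\mathbb{B}(2m),m)$ with $0/1 < h/k < 1/1$. -/
import Mathlib

/-- Identity for fractions of the Farey subsequence `𝓕(𝔹(2m), m)`.
The outer sum ranges over reduced fractions `h/k` with `0 < h/k < 1`,
`k ≤ 2m`, `h ≤ m`, `k - h ≤ m`. -/
theorem fareyB2_binomial_identity (m : ℕ) (hm : 1 < m) :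
    ∑ p ∈ (Finset.Icc 1 (2 * m) ×ˢ Finset.Icc 1 (2 * m)).filter
        (fun p => p.1 < p.2 ∧ Nat.Coprime p.1 p.2 ∧ p.1 ≤ m ∧ p.2 - p.1 ≤ m),
      ∑ s ∈ Finset.Icc 1 (min (m / p.1) (m / (p.2 - p.1))),
        (m.choose (s * p.1)) * (m.choose (s * (p.2 - p.1)))
      = 2 ^ (2 * m) - 2 ^ (m + 1) + 1 := by
  have key : ∑ p ∈ (Finset.Icc 1 (2 * m) ×ˢ Finset.Icc 1 (2 * m)).filter
        (fun p => p.1 < p.2 ∧ Nat.Coprime p.1 p.2 ∧ p.1 ≤ m ∧ p.2 - p.1 ≤ m),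
      ∑ s ∈ Finset.Icc 1 (min (m / p.1) (m / (p.2 - p.1))),
        (m.choose (s * p.1)) * (m.choose (s * (p.2 - p.1)))
      = ∑ q ∈ Finset.Icc 1 m ×ˢ Finset.Icc 1 m, (m.choose q.1) * (m.choose q.2) := by
    rw [Finset.sum_sigma']
    refine Finset.sum_nbij' (fun x => (x.2 * x.1.1, x.2 * (x.1.2 - x.1.1)))
      (fun q => ⟨(q.1 / Nat.gcd q.1 q.2, q.1 / Nat.gcd q.1 q.2 + q.2 / Nat.gcd q.1 q.2),
        Nat.gcd q.1 q.2⟩) ?_ ?_ ?_ ?_ ?_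
    · rintro ⟨⟨h, k⟩, s⟩ hx
      simp only [Finset.mem_sigma, Finset.mem_filter, Finset.mem_product, Finset.mem_Icc] at hx ⊢
      obtain ⟨⟨⟨⟨h1, h2⟩, ⟨k1, k2⟩⟩, hlt, hcop, hhm, hkm⟩, hs1, hs2⟩ := hx
      have hkh : 1 ≤ k - h := by omega
      have hs2' := le_min_iff.mp hs2
      have e1 : s * h ≤ m := by
        have := (Nat.le_div_iff_mul_le (by omega : 0 < h)).mp hs2'.1
        omega
      have e2 : s * (k - h) ≤ m := by
        have := (Nat.le_div_iff_mul_le (by omega : 0 < k - h)).mp hs2'.2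
        omega
      refine ⟨⟨?_, e1⟩, ?_, e2⟩
      · exact Nat.one_le_iff_ne_zero.mpr (by positivity)
      · exact Nat.one_le_iff_ne_zero.mpr (by positivity)
    · rintro ⟨a, b⟩ hq
      simp only [Finset.mem_product, Finset.mem_Icc] at hq
      obtain ⟨⟨ha1, ha2⟩, hb1, hb2⟩ := hq
      simp only [Finset.mem_sigma, Finset.mem_filter, Finset.mem_product, Finset.mem_Icc]
      set g := Nat.gcd a b with hg
      have hg0 : 0 < g := Nat.gcd_pos_of_pos_left _ (by omega)
      have hga : g ∣ a := Nat.gcd_dvd_left a b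
      have hgb : g ∣ b := Nat.gcd_dvd_right a b
      have ha' : 1 ≤ a / g := (Nat.one_le_div_iff hg0).mpr (Nat.le_of_dvd (by omega) hga)
      have hb' : 1 ≤ b / g := (Nat.one_le_div_iff hg0).mpr (Nat.le_of_dvd (by omega) hgb)
      have haa : a / g ≤ a := Nat.div_le_self a g
      have hbb : b / g ≤ b := Nat.div_le_self b g
      have hcop : Nat.Coprime (a / g) (b / g) := Nat.coprime_div_gcd_div_gcd hg0
      refine ⟨⟨⟨⟨by omega, by omega⟩, by omega, by omega⟩, by omega, ?_, by omega, by omega⟩,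
        by omega, le_min ?_ ?_⟩
      · rwa [Nat.coprime_self_add_right]
      · rw [Nat.le_div_iff_mul_le (by omega : 0 < a / g)]
        calc g * (a / g) = a := Nat.mul_div_cancel' hga
        _ ≤ m := ha2
      · rw [show a / g + b / g - a / g = b / g by omega,
          Nat.le_div_iff_mul_le (by omega : 0 < b / g)]
        calc g * (b / g) = b := Nat.mul_div_cancel' hgb
        _ ≤ m := hb2
    · rintro ⟨⟨h, k⟩, s⟩ hx
      simp only [Finset.mem_sigma, Finset.mem_filter, Finset.mem_product, Finset.mem_Icc] at hx
      obtain ⟨⟨⟨⟨h1, h2⟩, ⟨k1, k2⟩⟩, hlt, hcop, hhm, hkm⟩, hs1, hs2⟩ := hx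
      have hcop' : Nat.Coprime h (k - h) := by
        rwa [Nat.coprime_sub_self_right (le_of_lt hlt)]
      have hgcd : Nat.gcd (s * h) (s * (k - h)) = s := by
        rw [Nat.gcd_mul_left, hcop', Nat.mul_one]
      simp only [hgcd]
      have e1 : s * h / s = h := Nat.mul_div_cancel_left h (by omega)
      have e2 : s * (k - h) / s = k - h := Nat.mul_div_cancel_left _ (by omega)
      rw [e1, e2, show h + (k - h) = k by omega]
    · rintro ⟨a, b⟩ hq
      simp only [Finset.mem_product, Finset.mem_Icc] at hq
      obtain ⟨⟨ha1, ha2⟩, hb1, hb2⟩ := hq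
      dsimp only
      have hga : Nat.gcd a b ∣ a := Nat.gcd_dvd_left a b
      have hgb : Nat.gcd a b ∣ b := Nat.gcd_dvd_right a b
      simp only [Prod.mk.injEq]
      refine ⟨Nat.mul_div_cancel' hga, ?_⟩
      rw [show a / Nat.gcd a b + b / Nat.gcd a b - a / Nat.gcd a b = b / Nat.gcd a b by simp]
      exact Nat.mul_div_cancel' hgb
    · rintro ⟨⟨h, k⟩, s⟩ hx
      rfl
  rw [key, Finset.sum_product, ← Finset.sum_mul_sum]
  have hsum : ∑ a ∈ Finset.Icc 1 m, m.choose a = 2 ^ m - 1 := by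
    have h0 : ∑ a ∈ Finset.range (m + 1), m.choose a = 2 ^ m := Nat.sum_range_choose m
    have hset : Finset.range (m + 1) = insert 0 (Finset.Icc 1 m) := by
      ext x
      simp only [Finset.mem_range, Finset.mem_insert, Finset.mem_Icc]
      omega
    rw [hset, Finset.sum_insert (by simp)] at h0
    simp only [Nat.choose_zero_right] at h0
    omega
  rw [hsum]
  have h1 : (1:ℕ) ≤ 2 ^ m := Nat.one_le_two_pow
  have h2 : 2 ^ (m + 1) ≤ 2 ^ (2 * m) := Nat.pow_le_pow_right (by norm_num) (by omega)
  zify [h1, h2]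
  ring
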